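/- Let n ≥ 2. There exists a finite set S ⊆ ℝ^{n−1} of cardinality exactly C(n, ⌈n/2⌉) that illuminates the unit ball B_H of ‖·‖_H: for every z ∈ ℝ^{n−1} with ‖z‖_H = 1 there exist v ∈ S and ε > 0 such that ‖z + λv‖_H < 1 for all 0 < λ < ε. -/

import Mathlib

/-- The variation seminorm `max_i x_i - min_i x_i` on `ℝⁿ` (a norm on `V0`). -/
noncomputable def vnorm (n : ℕ) (x : Fin n → ℝ) : ℝ := (⨆ i, x i) - (⨅ i, x i)

/-- The norm `‖x‖_H = max(max_i x_i, 0) - min(min_i x_i, 0)` on `ℝᵐ`. -/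
noncomputable def Hnorm (m : ℕ) (x : Fin m → ℝ) : ℝ :=
  max (⨆ i, x i) 0 - min (⨅ i, x i) 0

/-- Hilbert's (projective) metric on the open positive cone. -/
noncomputable def dH (n : ℕ) (x y : Fin n → ℝ) : ℝ :=
  Real.log (⨆ i, x i / y i) - Real.log (⨅ i, x i / y i)

/-- `V0 = {x ∈ ℝⁿ : x_n = 0}` (the last coordinate vanishes). -/
def V0 (n : ℕ) : Set (Fin n → ℝ) := {x | ∀ i : Fin n, (i : ℕ) = n - 1 → x i = 0}

/-- `v` illuminates `z` (a point of the unit sphere of the norm `nrm`). -/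
def illum (m : ℕ) (nrm : (Fin m → ℝ) → ℝ) (v z : Fin m → ℝ) : Prop :=
  ∃ ε > 0, ∀ l : ℝ, 0 < l → l < ε → nrm (z + l • v) < 1

open Finset List

namespace SCD

/-- chain through `S` in the Boolean lattice of subsets of `range N`. -/
def ch : ℕ → Finset ℕ → List (Finset ℕ)
  | 0, _ => [∅]
  | N+1, S =>
    let c := ch N (S.erase N)
    if N ∈ S ∧ S.erase N ≠ c.getLastD ∅ then (c.dropLast).map (insert N)
    else c ++ [insert N (c.getLastD ∅)]

/-- saturated chain property -/
def sat (c : List (Finset ℕ)) : Prop :=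
  ∀ i, i + 1 < c.length → c.getD i ∅ ⊆ c.getD (i+1) ∅ ∧
    (c.getD (i+1) ∅).card = (c.getD i ∅).card + 1

lemma getLastD_eq_getD (c : List (Finset ℕ)) (hc : c ≠ []) :
    c.getLastD ∅ = c.getD (c.length - 1) ∅ := by
  rw [List.getD_eq_getElem (hn := by cases c <;> simp_all)]
  rw [List.getLastD_eq_getLast? , List.getLast?_eq_getLast hc, Option.getD_some,
    List.getLast_eq_getElem]

lemma getLastD_mem (c : List (Finset ℕ)) (hc : c ≠ []) : c.getLastD ∅ ∈ c := by
  rw [getLastD_eq_getD c hc, List.getD_eq_getElem (hn := by cases c <;> simp_all)]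
  exact List.getElem_mem _

lemma sat_card (c : List (Finset ℕ)) (hs : sat c) :
    ∀ i, i < c.length → (c.getD i ∅).card = (c.getD 0 ∅).card + i := by
  intro i
  induction i with
  | zero => simp
  | succ k ih => intro h; rw [(hs k h).2, ih (by omega)]; omega

lemma sat_mono (c : List (Finset ℕ)) (hs : sat c) :
    ∀ i j, i ≤ j → j < c.length → c.getD i ∅ ⊆ c.getD j ∅ := by
  intro i j hij
  induction j with
  | zero => intro _; rw [Nat.le_zero.mp hij]
  | succ k ih =>
    intro hk
    rcases Nat.lt_or_ge i (k+1) with h | h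
    · exact subset_trans (ih (by omega) (by omega)) (hs k hk).1
    · have : i = k + 1 := by omega
      subst this; rfl

end SCD

namespace SCD

lemma mem_iff_getD (c : List (Finset ℕ)) (T : Finset ℕ) :
    T ∈ c ↔ ∃ i, i < c.length ∧ c.getD i ∅ = T := by
  rw [List.mem_iff_getElem]
  constructor
  · rintro ⟨i, h, rfl⟩; exact ⟨i, h, List.getD_eq_getElem _ _ h⟩
  · rintro ⟨i, h, rfl⟩; exact ⟨i, h, (List.getD_eq_getElem _ _ h).symm⟩

lemma getD_mem (c : List (Finset ℕ)) (i : ℕ) (h : i < c.length) : c.getD i ∅ ∈ c :=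
  (mem_iff_getD c _).mpr ⟨i, h, rfl⟩

lemma getD_dropLast_map (c : List (Finset ℕ)) (i : ℕ) (h : i < c.length - 1) :
    ((c.dropLast).map (insert N)).getD i ∅ = insert N (c.getD i ∅) := by
  have h1 : i < ((c.dropLast).map (insert N)).length := by simpa using h
  have h2 : i < c.dropLast.length := by simpa using h
  rw [List.getD_eq_getElem _ _ h1, List.getElem_map, List.getElem_dropLast,
    List.getD_eq_getElem _ _ (by omega)]

lemma mem_dropLast_of_ne_last (c : List (Finset ℕ)) (hs : sat c) (T : Finset ℕ)
    (hT : T ∈ c) (hne : T ≠ c.getLastD ∅) : T ∈ c.dropLast := by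
  have hc : c ≠ [] := List.ne_nil_of_mem hT
  obtain ⟨i, hi, rfl⟩ := (mem_iff_getD c T).mp hT
  have hil : i ≠ c.length - 1 := by
    intro h; exact hne (by rw [getLastD_eq_getD c hc, h])
  have hi' : i < c.dropLast.length := by simp; omega
  rw [mem_iff_getElem]
  refine ⟨i, hi', ?_⟩
  rw [List.getElem_dropLast, ← List.getD_eq_getElem _ ∅ (by omega)]

lemma ch_succ (N : ℕ) (S : Finset ℕ) : ch (N+1) S =
    if N ∈ S ∧ S.erase N ≠ (ch N (S.erase N)).getLastD ∅ then
      ((ch N (S.erase N)).dropLast).map (insert N)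
    else (ch N (S.erase N)) ++ [insert N ((ch N (S.erase N)).getLastD ∅)] := rfl

end SCD

namespace SCD

lemma ch_inv (N : ℕ) : ∀ S : Finset ℕ, S ⊆ Finset.range N →
    (ch N S ≠ []) ∧ (∀ T ∈ ch N S, T ⊆ Finset.range N) ∧ (S ∈ ch N S) ∧
    (∀ T ∈ ch N S, ch N T = ch N S) ∧ sat (ch N S) ∧
    ((ch N S).getD 0 ∅).card + ((ch N S).getLastD ∅).card = N := by
  induction N with
  | zero =>
    intro S hS
    have hSe : S = ∅ := Finset.subset_empty.mp (by simpa using hS)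
    subst hSe
    refine ⟨by simp [ch], by simp [ch], by simp [ch], ?_, ?_, by simp [ch]⟩
    · intro T hT
      simp only [ch, List.mem_singleton] at hT
      subst hT; rfl
    · intro i hi; simp [ch] at hi
  | succ N IH =>
    intro S hS
    set S' := S.erase N with hS'def
    have hS' : S' ⊆ Finset.range N := by
      intro x hx
      have hx1 := Finset.mem_of_mem_erase hx
      have hx2 := Finset.ne_of_mem_erase hx
      have := Finset.mem_range.mp (hS hx1)
      exact Finset.mem_range.mpr (by omega)
    obtain ⟨h1, h2, h3, h4, h5, h6⟩ := IH S' hS'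
    set c := ch N S' with hcdef
    set L := c.getLastD ∅ with hLdef
    have hLmem : L ∈ c := getLastD_mem c h1
    have hLsub : L ⊆ Finset.range N := h2 L hLmem
    have hLN : N ∉ L := fun h => by simpa using Finset.mem_range.mp (hLsub h)
    have hchL : ch N L = c := h4 L hLmem
    have hNm : ∀ T ∈ c, N ∉ T := fun T hT h =>
      by simpa using Finset.mem_range.mp (h2 T hT h)
    have hclen : 0 < c.length := List.length_pos_iff.mpr h1
    have hcard0 : ∀ i, i < c.length → (c.getD i ∅).card = (c.getD 0 ∅).card + i :=
      sat_card c h5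
    have hLcard : L.card = (c.getD 0 ∅).card + (c.length - 1) := by
      rw [hLdef, getLastD_eq_getD c h1]; exact hcard0 _ (by omega)
    by_cases hcond : N ∈ S ∧ S' ≠ L
    · -- new chain is the dropLast one
      have hch : ch (N+1) S = (c.dropLast).map (insert N) := by
        rw [ch_succ]; rw [if_pos (by exact hcond)]
      have hlen2 : 2 ≤ c.length := by
        rcases Nat.lt_or_ge c.length 2 with h | h
        · exfalso
          obtain ⟨i, hi, hgi⟩ := (mem_iff_getD c S').mp h3
          have : i = 0 := by omega
          subst this
          exact hcond.2 (by rw [← hgi, hLdef, getLastD_eq_getD c h1]; congr 1; omega)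
        · exact h
      set d := (c.dropLast).map (insert N) with hddef
      have hdlen : d.length = c.length - 1 := by simp [hddef]
      have hdD : ∀ i, i < c.length - 1 → d.getD i ∅ = insert N (c.getD i ∅) :=
        fun i hi => getD_dropLast_map c i hi
      have hdne : d ≠ [] := List.ne_nil_of_length_pos (by omega)
      have hdmem : ∀ T ∈ d, ∃ i, i < c.length - 1 ∧ T = insert N (c.getD i ∅) := by
        intro T hT
        obtain ⟨i, hi, hgi⟩ := (mem_iff_getD d T).mp hT
        exact ⟨i, by omega, by rw [← hgi, hdD i (by omega)]⟩
      rw [hch]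
      refine ⟨hdne, ?_, ?_, ?_, ?_, ?_⟩
      · -- subsets of range (N+1)
        intro T hT
        obtain ⟨i, hi, rfl⟩ := hdmem T ((hch ▸ hch) ▸ hT)
        apply Finset.insert_subset (by simp)
        exact subset_trans (h2 _ (getD_mem c i (by omega)))
          (Finset.range_subset_range.mpr (by omega))
      · -- S ∈ d
        have hSm : S = insert N S' := (Finset.insert_erase hcond.1).symm
        rw [hSm]
        apply List.mem_map_of_mem
        exact mem_dropLast_of_ne_last c h5 S' h3 hcond.2
      · -- invariance
        intro T hT
        obtain ⟨i, hi, rfl⟩ := hdmem T hT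
        set P := c.getD i ∅ with hPdef
        have hPmem : P ∈ c := getD_mem c i (by omega)
        have hPN : N ∉ P := hNm P hPmem
        have hPL : P ≠ L := by
          intro h
          have := hLcard
          rw [← h, hcard0 i (by omega)] at this
          omega
        rw [ch_succ, Finset.erase_insert hPN, h4 P hPmem]
        rw [if_pos ⟨Finset.mem_insert_self _ _, hPL⟩]
      · -- sat
        intro i hi
        rw [hdlen] at hi
        rw [hdD i (by omega), hdD (i+1) (by omega)]
        obtain ⟨hsub, hcard⟩ := h5 i (by omega)
        have hN1 : N ∉ c.getD i ∅ := hNm _ (getD_mem c i (by omega))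
        have hN2 : N ∉ c.getD (i+1) ∅ := hNm _ (getD_mem c (i+1) (by omega))
        refine ⟨Finset.insert_subset_insert _ hsub, ?_⟩
        rw [Finset.card_insert_of_notMem hN1, Finset.card_insert_of_notMem hN2, hcard]
      · -- symmetric cards
        have hd0 : d.getD 0 ∅ = insert N (c.getD 0 ∅) := hdD 0 (by omega)
        have hdl : d.getLastD ∅ = insert N (c.getD (c.length - 1 - 1) ∅) := by
          rw [getLastD_eq_getD d hdne, hdlen, hdD _ (by omega)]
        rw [hd0, hdl, Finset.card_insert_of_notMem (hNm _ (getD_mem c 0 (by omega))),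
          Finset.card_insert_of_notMem (hNm _ (getD_mem c _ (by omega))),
          hcard0 (c.length - 1 - 1) (by omega)]
        omega
    · -- new chain is the extended one
      have hch : ch (N+1) S = c ++ [insert N L] := by
        rw [ch_succ]; rw [if_neg hcond]
      set d := c ++ [insert N L] with hddef
      have hdlen : d.length = c.length + 1 := by simp [hddef]
      have hdD1 : ∀ i, i < c.length → d.getD i ∅ = c.getD i ∅ :=
        fun i hi => List.getD_append _ _ _ _ hi
      have hdD2 : d.getD c.length ∅ = insert N L := by
        rw [List.getD_append_right _ _ _ _ (le_refl _), Nat.sub_self]; rfl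
      rw [hch]
      refine ⟨by simp [hddef], ?_, ?_, ?_, ?_, ?_⟩
      · intro T hT
        rcases List.mem_append.mp hT with h | h
        · exact subset_trans (h2 T h) (Finset.range_subset_range.mpr (by omega))
        · rw [List.mem_singleton.mp h]
          exact Finset.insert_subset (by simp)
            (subset_trans hLsub (Finset.range_subset_range.mpr (by omega)))
      · by_cases hNS : N ∈ S
        · have hSL : S' = L := by
            by_contra h; exact hcond ⟨hNS, h⟩
          have : S = insert N L := by rw [← hSL, Finset.insert_erase hNS]
          rw [this]; exact List.mem_append_right _ (by simp)
        · have : S' = S := Finset.erase_eq_of_notMem hNS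
          exact List.mem_append_left _ (this ▸ h3)
      · intro T hT
        rcases List.mem_append.mp hT with h | h
        · have hTN : N ∉ T := hNm T h
          rw [ch_succ, Finset.erase_eq_of_notMem hTN, h4 T h]
          rw [if_neg (fun hc => hTN hc.1)]
        · rw [List.mem_singleton.mp h]
          rw [ch_succ, Finset.erase_insert hLN, hchL]
          rw [if_neg (fun hc => hc.2 rfl)]
      · intro i hi
        rw [hdlen] at hi
        rcases Nat.lt_or_ge (i+1) c.length with h | h
        · rw [hdD1 i (by omega), hdD1 (i+1) h]
          exact h5 i h
        · have hieq : i + 1 = c.length := by omega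
          have : d.getD i ∅ = L := by
            rw [hdD1 i (by omega), hLdef, getLastD_eq_getD c h1]
            congr 1; omega
          rw [this, hieq, hdD2]
          exact ⟨Finset.subset_insert _ _, Finset.card_insert_of_notMem hLN⟩
      · have hd0 : d.getD 0 ∅ = c.getD 0 ∅ := hdD1 0 (by omega)
        have hdl : d.getLastD ∅ = insert N L := by
          rw [hddef, List.getLastD_concat]
        rw [hd0, hdl, Finset.card_insert_of_notMem hLN]
        omega

end SCD

namespace SCD

lemma ch_middle (N : ℕ) (S : Finset ℕ) (hS : S ⊆ Finset.range N) :
    ∃ j, j < (ch N S).length ∧ ((ch N S).getD j ∅).card = (N+1)/2 := by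
  obtain ⟨h1, h2, h3, h4, h5, h6⟩ := ch_inv N S hS
  set c := ch N S with hcdef
  have hclen : 0 < c.length := List.length_pos_iff.mpr h1
  have hlast : (c.getLastD ∅).card = (c.getD 0 ∅).card + (c.length - 1) := by
    rw [getLastD_eq_getD c h1]; exact sat_card c h5 _ (by omega)
  set a := (c.getD 0 ∅).card with hadef
  have key : a + (a + (c.length - 1)) = N := by rw [← hlast]; exact h6
  refine ⟨(N+1)/2 - a, by omega, ?_⟩
  rw [sat_card c h5 _ (by omega)]
  omega

lemma mem_getD_iff_findIdx (c : List (Finset ℕ)) (hs : sat c) (j : ℕ)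
    (hj : j < c.length) (x : ℕ) :
    x ∈ c.getD j ∅ ↔ c.findIdx (fun T => x ∈ T) ≤ j := by
  constructor
  · intro hx
    by_contra h
    push_neg at h
    have h2 := List.not_of_lt_findIdx h
    rw [List.getD_eq_getElem _ ∅ hj] at hx
    rw [decide_eq_false_iff_not] at h2
    exact h2 hx
  · intro h
    have hlt : c.findIdx (fun T => x ∈ T) < c.length := by omega
    have := @List.findIdx_getElem _ (fun T => decide (x ∈ T)) c hlt
    rw [← List.getD_eq_getElem _ ∅ hlt] at this
    simp only [decide_eq_true_eq] at this
    exact sat_mono c hs _ j h hj this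

/-- the vector associated to the chain through `S`. -/
noncomputable def chvec (N : ℕ) (S : Finset ℕ) : Fin N → ℝ :=
  fun i => ((ch N S).findIdx (fun T => (i : ℕ) ∈ T) : ℝ)

lemma cover (N : ℕ) : ∃ W : Finset (Fin N → ℝ), W.card ≤ Nat.choose N ((N+1)/2) ∧
    ∀ A : Finset (Fin N), ∃ w ∈ W, ∃ t : ℝ, ∀ i, w i ≤ t ↔ i ∈ A := by
  classical
  refine ⟨(Finset.powersetCard ((N+1)/2) (Finset.range N)).image (chvec N), ?_, ?_⟩
  · calc _ ≤ (Finset.powersetCard ((N+1)/2) (Finset.range N)).card := Finset.card_image_le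
    _ = _ := by rw [Finset.card_powersetCard, Finset.card_range]
  · intro A
    set Ab := A.image (Fin.val) with hAbdef
    have hAbsub : Ab ⊆ Finset.range N := by
      intro x hx
      obtain ⟨i, _, rfl⟩ := Finset.mem_image.mp hx
      exact Finset.mem_range.mpr i.isLt
    have hmemAb : ∀ i : Fin N, (i : ℕ) ∈ Ab ↔ i ∈ A := by
      intro i
      simp only [hAbdef, Finset.mem_image]
      constructor
      · rintro ⟨a, ha, hav⟩; rwa [← Fin.val_injective hav]
      · intro h; exact ⟨i, h, rfl⟩
    obtain ⟨h1, h2, h3, h4, h5, h6⟩ := ch_inv N Ab hAbsub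
    set c := ch N Ab with hcdef
    obtain ⟨j, hj, hjcard⟩ := ch_middle N Ab hAbsub
    set T := c.getD j ∅ with hTdef
    have hTmem : T ∈ c := getD_mem c j hj
    have hTr : T ∈ Finset.powersetCard ((N+1)/2) (Finset.range N) :=
      Finset.mem_powersetCard.mpr ⟨h2 T hTmem, hjcard⟩
    have hchT : ch N T = c := h4 T hTmem
    refine ⟨chvec N T, Finset.mem_image_of_mem _ hTr, ?_⟩
    obtain ⟨jA, hjA, hgA⟩ := (mem_iff_getD c Ab).mp h3
    refine ⟨(jA : ℝ), fun i => ?_⟩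
    rw [chvec, hchT, Nat.cast_le, ← mem_getD_iff_findIdx c h5 jA hjA, hgA, hmemAb]

end SCD

namespace SCD

lemma exists_isup {m : ℕ} (f : Fin (m+1) → ℝ) :
    ∃ i, (∀ j, f j ≤ f i) ∧ (⨆ j, f j) = f i := by
  obtain ⟨i, hi⟩ := Finite.exists_max f
  exact ⟨i, hi, le_antisymm (ciSup_le hi) (le_ciSup (Finite.bddAbove_range f) i)⟩

lemma exists_iinf {m : ℕ} (f : Fin (m+1) → ℝ) :
    ∃ i, (∀ j, f i ≤ f j) ∧ (⨅ j, f j) = f i := by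
  obtain ⟨i, hi⟩ := Finite.exists_min f
  exact ⟨i, hi, le_antisymm (ciInf_le (Finite.bddBelow_range f) i) (le_ciInf hi)⟩

lemma illum_aux (m : ℕ) (y w : Fin (m+1) → ℝ) (hy : vnorm (m+1) y = 1)
    (hw : ∀ i j, y i = (⨆ k, y k) → y j = (⨅ k, y k) → w i < w j) :
    ∃ ε > 0, ∀ l : ℝ, 0 < l → l < ε → vnorm (m+1) (y + l • w) < 1 := by
  classical
  obtain ⟨iM, hiM, hMeq⟩ := exists_isup y
  obtain ⟨im, him, hmeq⟩ := exists_iinf y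
  set M := ⨆ k, y k with hMdef
  set μ := ⨅ k, y k with hμdef
  have hMμ : M - μ = 1 := hy
  set A : Finset (Fin (m+1)) := Finset.univ.filter (fun i => y i = M) with hAdef
  set B : Finset (Fin (m+1)) := Finset.univ.filter (fun i => y i = μ) with hBdef
  have hA : A.Nonempty := ⟨iM, by simp [hAdef, hMeq.symm]⟩
  have hB : B.Nonempty := ⟨im, by simp [hBdef, hmeq.symm]⟩
  have hMne : M ≠ μ := by intro h; rw [h] at hMμ; simp at hMμ
  have hyim : y im = μ := hmeq.symm
  have hyiM : y iM = M := hMeq.symm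
  have hAc : Aᶜ.Nonempty :=
    ⟨im, Finset.mem_compl.mpr (fun h => hMne ((Finset.mem_filter.mp h).2.symm.trans hyim))⟩
  have hBc : Bᶜ.Nonempty :=
    ⟨iM, Finset.mem_compl.mpr (fun h => hMne (hyiM.symm.trans (Finset.mem_filter.mp h).2))⟩
  set c1 := A.sup' hA w with hc1def
  set c2 := B.inf' hB w with hc2def
  have hc : c1 < c2 := by
    rw [Finset.sup'_lt_iff]
    intro i hi
    rw [Finset.lt_inf'_iff]
    intro j hj
    exact hw i j (Finset.mem_filter.mp hi).2 (Finset.mem_filter.mp hj).2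
  set Ma := Aᶜ.sup' hAc y with hMadef
  have hMa : Ma < M := by
    rw [Finset.sup'_lt_iff]
    intro i hi
    have h1 : y i ≠ M := by
      have := Finset.mem_compl.mp hi
      simpa [hAdef] using this
    exact lt_of_le_of_ne (hMeq ▸ hiM i) h1
  set mb := Bᶜ.inf' hBc y with hmbdef
  have hmb : μ < mb := by
    rw [Finset.lt_inf'_iff]
    intro i hi
    have h1 : y i ≠ μ := by
      have := Finset.mem_compl.mp hi
      simpa [hBdef] using this
    exact lt_of_le_of_ne (hmeq ▸ him i) (Ne.symm h1)
  set Wb := (Finset.univ.sup' ⟨iM, Finset.mem_univ iM⟩ (fun i => |w i|)) + 1 with hWbdef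
  have hWb : ∀ i, |w i| < Wb :=
    fun i => lt_of_le_of_lt (Finset.le_sup' (fun i => |w i|) (Finset.mem_univ i)) (lt_add_one _)
  have hWbc1 : 0 < Wb - c1 := by
    obtain ⟨i1, hi1, he⟩ := Finset.exists_mem_eq_sup' hA w
    have := hWb i1
    have h2 := le_abs_self (w i1)
    rw [hc1def, he]; linarith
  have hWbc2 : 0 < c2 + Wb := by
    obtain ⟨j1, hj1, he⟩ := Finset.exists_mem_eq_inf' hB w
    have := hWb j1
    have h2 := neg_abs_le (w j1)
    rw [hc2def, he]; linarith
  refine ⟨min ((M - Ma)/(Wb - c1)) ((mb - μ)/(c2 + Wb)),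
    lt_min (div_pos (by linarith) hWbc1) (div_pos (by linarith) hWbc2), ?_⟩
  intro l hl0 hlε
  have hl1 : l * (Wb - c1) < M - Ma := by
    have := lt_of_lt_of_le hlε (min_le_left _ _)
    exact (lt_div_iff₀ hWbc1).mp this
  have hl2 : l * (c2 + Wb) < mb - μ := by
    have := lt_of_lt_of_le hlε (min_le_right _ _)
    exact (lt_div_iff₀ hWbc2).mp this
  have hsup : ∀ i, y i + l * w i ≤ M + l * c1 := by
    intro i
    by_cases hi : i ∈ A
    · have h1 : y i = M := (Finset.mem_filter.mp hi).2
      have h2 : w i ≤ c1 := Finset.le_sup' _ hi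
      nlinarith
    · have h1 : y i ≤ Ma := Finset.le_sup' _ (Finset.mem_compl.mpr hi)
      have h2 : w i < Wb := lt_of_le_of_lt (le_abs_self _) (hWb i)
      nlinarith
  have hinf : ∀ i, μ + l * c2 ≤ y i + l * w i := by
    intro i
    by_cases hi : i ∈ B
    · have h1 : y i = μ := (Finset.mem_filter.mp hi).2
      have h2 : c2 ≤ w i := Finset.inf'_le _ hi
      nlinarith
    · have h1 : mb ≤ y i := Finset.inf'_le _ (Finset.mem_compl.mpr hi)
      have h2 : -Wb < w i := lt_of_lt_of_le (neg_lt_neg (hWb i)) (neg_abs_le _)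
      nlinarith
  have h1 : (⨆ i, (y + l • w) i) ≤ M + l * c1 :=
    ciSup_le (fun i => by simpa [smul_eq_mul] using hsup i)
  have h2 : μ + l * c2 ≤ ⨅ i, (y + l • w) i :=
    le_ciInf (fun i => by simpa [smul_eq_mul] using hinf i)
  have h3 : vnorm (m+1) (y + l • w) ≤ (M + l * c1) - (μ + l * c2) := sub_le_sub h1 h2
  nlinarith

end SCD

namespace SCD

lemma hnorm_eq_vnorm_snoc (m : ℕ) (hm : 0 < m) (z : Fin m → ℝ) :
    Hnorm m z = vnorm (m+1) (Fin.snoc z 0) := by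
  have : Nonempty (Fin m) := ⟨⟨0, hm⟩⟩
  set y : Fin (m+1) → ℝ := Fin.snoc z 0 with hydef
  have hyc : ∀ j : Fin m, y (Fin.castSucc j) = z j := fun j => Fin.snoc_castSucc ..
  have hyl : y (Fin.last m) = 0 := Fin.snoc_last ..
  have hb1 : ∀ j : Fin m, z j ≤ ⨆ i, y i := fun j =>
    (hyc j) ▸ le_ciSup (Finite.bddAbove_range y) (Fin.castSucc j)
  have hb2 : (0:ℝ) ≤ ⨆ i, y i := hyl ▸ le_ciSup (Finite.bddAbove_range y) (Fin.last m)
  have hb3 : ∀ j : Fin m, (⨅ i, y i) ≤ z j := fun j =>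
    (hyc j) ▸ ciInf_le (Finite.bddBelow_range y) (Fin.castSucc j)
  have hb4 : (⨅ i, y i) ≤ 0 := hyl ▸ ciInf_le (Finite.bddBelow_range y) (Fin.last m)
  unfold Hnorm vnorm
  congr 1
  · apply _root_.le_antisymm
    · exact max_le (ciSup_le hb1) hb2
    · apply ciSup_le
      intro i
      refine Fin.lastCases ?_ ?_ i
      · rw [hyl]; exact le_max_right _ _
      · intro j
        rw [hyc j]
        exact le_trans (le_ciSup (Finite.bddAbove_range z) j) (le_max_left _ _)
  · apply _root_.le_antisymm
    · apply le_ciInf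
      intro i
      refine Fin.lastCases ?_ ?_ i
      · rw [hyl]; exact min_le_right _ _
      · intro j
        rw [hyc j]
        exact le_trans (min_le_left _ _) (ciInf_le (Finite.bddBelow_range z) j)
    · exact le_min (le_ciInf hb3) hb4

end SCD

theorem stmt10 (n : ℕ) (hn : 2 ≤ n) :
    ∃ S : Finset (Fin (n - 1) → ℝ), S.card = Nat.choose n ((n + 1) / 2) ∧
      ∀ z : Fin (n - 1) → ℝ, Hnorm (n - 1) z = 1 →
        ∃ v ∈ S, illum (n - 1) (Hnorm (n - 1)) v z := by
  classical
  obtain ⟨m, rfl⟩ : ∃ m, n = m + 1 := ⟨n - 1, by omega⟩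
  have hm : 0 < m := by omega
  haveI : Nonempty (Fin m) := ⟨⟨0, hm⟩⟩
  obtain ⟨W, hWcard, hWcover⟩ := SCD.cover (m+1)
  set F : (Fin (m+1) → ℝ) → (Fin m → ℝ) :=
    fun w => fun i => w i.castSucc - w (Fin.last m) with hFdef
  have hW'card : (W.image F).card ≤ Nat.choose (m+1) ((m+2)/2) :=
    le_trans Finset.card_image_le hWcard
  haveI : Infinite (Fin m → ℝ) := Pi.infinite_of_right
  obtain ⟨S, hSsub, hScard⟩ :=
    Infinite.exists_superset_card_eq (W.image F) (Nat.choose (m+1) ((m+2)/2)) hW'card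
  refine ⟨S, hScard, ?_⟩
  show ∀ z : Fin m → ℝ, Hnorm m z = 1 → ∃ v ∈ S, illum m (Hnorm m) v z
  intro z hz
  set y : Fin (m+1) → ℝ := Fin.snoc z 0 with hydef
  have hy : vnorm (m+1) y = 1 := by
    rw [← SCD.hnorm_eq_vnorm_snoc m hm z]; exact hz
  set A : Finset (Fin (m+1)) := Finset.univ.filter (fun i => y i = ⨆ k, y k) with hAdef
  obtain ⟨w, hwW, t, hwt⟩ := hWcover A
  refine ⟨F w, hSsub (Finset.mem_image_of_mem F hwW), ?_⟩
  set wf : Fin (m+1) → ℝ := Fin.snoc (F w) 0 with hwfdef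
  have hsnocF : ∀ j : Fin (m+1), wf j = w j - w (Fin.last m) := by
    intro j
    refine Fin.lastCases ?_ ?_ j
    · simp [hwfdef]
    · intro i; simp [hwfdef, hFdef]
  have hwkey : ∀ i j : Fin (m+1), y i = (⨆ k, y k) → y j = (⨅ k, y k) →
      wf i < wf j := by
    intro i j hi hj
    rw [hsnocF i, hsnocF j]
    have hiA : i ∈ A := Finset.mem_filter.mpr ⟨Finset.mem_univ i, hi⟩
    have hjA : j ∉ A := by
      intro hjA
      have h1 : y j = ⨆ k, y k := (Finset.mem_filter.mp hjA).2
      have h2 : (⨆ k, y k) - (⨅ k, y k) = 1 := hy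
      rw [← h1, ← hj] at h2
      simp at h2
    have h1 : w i ≤ t := (hwt i).mpr hiA
    have h2 : t < w j := not_le.mp (fun h => hjA ((hwt j).mp h))
    linarith
  obtain ⟨ε, hε, hkey⟩ := SCD.illum_aux m y wf hy hwkey
  refine ⟨ε, hε, fun l hl0 hlε => ?_⟩
  have heq : Hnorm m (z + l • F w) = vnorm (m+1) (y + l • wf) := by
    rw [SCD.hnorm_eq_vnorm_snoc m hm]
    congr 1
    funext j
    refine Fin.lastCases ?_ ?_ j
    · simp [hydef, hwfdef]
    · intro i; simp [hydef, hwfdef]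
  rw [heq]
  exact hkey l hl0 hlε
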